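/- Abstract inf-sup correction lemma (the functional-analytic core of Theorem 4.1): Let H be a real inner product space, and let B and D be finite-dimensional subspaces of H. Assume there is a constant c > 0 such that for every q ∈ D, sup{⟨v, q⟩ : v ∈ B, ‖v‖ ≤ 1} ≥ c‖q‖. Then for every f ∈ H there exists m ∈ B such that ⟨m, q⟩ = ⟨f, q⟩ for all q ∈ D, and ‖m‖ ≤ (1/c)‖f‖. -/

import Mathlib

open MeasureTheory

theorem orthogonalProjection_inner_eq_zero_aux {H : Type*} [NormedAddCommGroup H]
    [InnerProductSpace ℝ H] {K : Submodule ℝ H} [K.HasOrthogonalProjection] (v w : H)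
    (hw : w ∈ K) : inner ℝ (v - ((Submodule.orthogonalProjectionOnto K v : K) : H)) w = 0 :=
  Submodule.starProjection_inner_eq_zero v w hw

/-- **Abstract inf-sup correction lemma** (the functional-analytic core of
Theorem 4.1): let `H` be a real inner ℝ product space and `B`, `D`
finite-dimensional subspaces. If there is `c > 0` such that for every `q ∈ D`
we have `sup {⟪v, q⟫ : v ∈ B, ‖v‖ ≤ 1} ≥ c ‖q‖`, then for every `f ∈ H` there
is `m ∈ B` with `⟪m, q⟫ = ⟪f, q⟫` for all `q ∈ D` and `‖m‖ ≤ (1/c) ‖f‖`. -/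
theorem abstract_inf_sup_correction
    {H : Type*} [NormedAddCommGroup H] [InnerProductSpace ℝ H]
    (B D : Submodule ℝ H) [FiniteDimensional ℝ B] [FiniteDimensional ℝ D]
    (c : ℝ) (hc : 0 < c)
    (hinfsup : ∀ q ∈ D,
      c * ‖q‖ ≤ sSup {r : ℝ | ∃ v ∈ B, ‖v‖ ≤ 1 ∧ r = (inner ℝ v q : ℝ)}) :
    ∀ f : H, ∃ m ∈ B, (∀ q ∈ D, (inner ℝ m q : ℝ) = (inner ℝ f q : ℝ)) ∧
      ‖m‖ ≤ (1 / c) * ‖f‖ := by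
  intro f
  -- Step 1: the inf-sup condition means `c * ‖q‖ ≤ ‖P_B q‖` for `q ∈ D`.
  have hproj : ∀ q ∈ D, c * ‖q‖ ≤ ‖((Submodule.orthogonalProjectionOnto B q : B) : H)‖ := by
    intro q hq
    refine (hinfsup q hq).trans (csSup_le ⟨0, 0, B.zero_mem, by simp⟩ ?_)
    rintro r ⟨v, hv, hv1, rfl⟩
    have h1 : (inner ℝ v q : ℝ) = inner ℝ v ((Submodule.orthogonalProjectionOnto B q : B) : H) := by
      have h0 := orthogonalProjection_inner_eq_zero_aux q v hv
      rw [inner_sub_left] at h0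
      rw [real_inner_comm v q, real_inner_comm v ((Submodule.orthogonalProjectionOnto B q : B) : H)] at h0
      linarith
    calc (inner ℝ v q : ℝ) = inner ℝ v ((Submodule.orthogonalProjectionOnto B q : B) : H) := h1
      _ ≤ ‖v‖ * ‖((Submodule.orthogonalProjectionOnto B q : B) : H)‖ := real_inner_le_norm _ _
      _ ≤ 1 * ‖((Submodule.orthogonalProjectionOnto B q : B) : H)‖ := by
          gcongr
      _ = _ := one_mul _
  -- `⟪P_B x, x⟫ = ‖P_B x‖^2`
  have hsq : ∀ x : H, (inner ℝ (((Submodule.orthogonalProjectionOnto B x : B) : H)) x : ℝ)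
      = ‖((Submodule.orthogonalProjectionOnto B x : B) : H)‖ ^ 2 := by
    intro x
    have h0 := orthogonalProjection_inner_eq_zero_aux x
      ((Submodule.orthogonalProjectionOnto B x : B) : H) (Submodule.orthogonalProjectionOnto B x).2
    rw [inner_sub_left] at h0
    have := real_inner_self_eq_norm_sq ((Submodule.orthogonalProjectionOnto B x : B) : H)
    rw [real_inner_comm]
    nlinarith [this]
  -- Step 2: the operator `T : D → D`, `T p = P_D (P_B p)` is bijective.
  set T : D →ₗ[ℝ] D :=
    (Submodule.orthogonalProjectionOnto D).toLinearMap ∘ₗ B.subtype ∘ₗ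
      (Submodule.orthogonalProjectionOnto B).toLinearMap ∘ₗ D.subtype with hT
  have hTval : ∀ p : D, T p = Submodule.orthogonalProjectionOnto D
      ((Submodule.orthogonalProjectionOnto B (p : H) : B) : H) := fun p => rfl
  -- inner ℝ (T p : H) q = inner ℝ (P_B p) q for q ∈ D
  have hTinner : ∀ (p : D) (q : H), q ∈ D →
      (inner ℝ ((T p : D) : H) q : ℝ)
        = inner ℝ ((Submodule.orthogonalProjectionOnto B ((p : H)) : B) : H) q := by
    intro p q hq
    have h0 := orthogonalProjection_inner_eq_zero_aux
      ((Submodule.orthogonalProjectionOnto B ((p : H)) : B) : H) q hq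
    rw [inner_sub_left] at h0
    rw [hTval]
    linarith
  have hTinj : Function.Injective T := by
    rw [← LinearMap.ker_eq_bot, LinearMap.ker_eq_bot']
    intro p hp
    have h1 : (inner ℝ ((T p : D) : H) ((p : H)) : ℝ)
        = ‖((Submodule.orthogonalProjectionOnto B ((p : H)) : B) : H)‖ ^ 2 := by
      rw [hTinner p (p : H) p.2, hsq]
    rw [hp] at h1
    simp only [Submodule.coe_zero, inner_zero_left] at h1
    have h2 : ‖((Submodule.orthogonalProjectionOnto B ((p : H)) : B) : H)‖ = 0 := by
      nlinarith [norm_nonneg ((Submodule.orthogonalProjectionOnto B ((p : H)) : B) : H)]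
    have h3 := hproj (p : H) p.2
    rw [h2] at h3
    have : ‖(p : H)‖ = 0 := by nlinarith [norm_nonneg ((p : H))]
    ext
    simpa using norm_eq_zero.mp this
  have hTsurj : Function.Surjective T :=
    (LinearMap.injective_iff_surjective).mp hTinj
  obtain ⟨p, hp⟩ := hTsurj (Submodule.orthogonalProjectionOnto D f)
  refine ⟨((Submodule.orthogonalProjectionOnto B ((p : H)) : B) : H),
    (Submodule.orthogonalProjectionOnto B ((p : H))).2, ?_, ?_⟩
  · intro q hq
    have h1 := hTinner p q hq
    rw [hp] at h1
    have h2 := orthogonalProjection_inner_eq_zero_aux f q hq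
    rw [inner_sub_left] at h2
    rw [← h1]; linarith
  · -- norm bound
    set m : H := ((Submodule.orthogonalProjectionOnto B ((p : H)) : B) : H) with hm
    have h1 : (inner ℝ m ((p : H)) : ℝ) = ‖m‖ ^ 2 := hsq (p : H)
    have h2 : (inner ℝ m ((p : H)) : ℝ) = inner ℝ f ((p : H)) := by
      have ha := hTinner p (p : H) p.2
      rw [hp] at ha
      have hb := orthogonalProjection_inner_eq_zero_aux f (p : H) p.2
      rw [inner_sub_left] at hb
      rw [← ha]; linarith
    have h3 : (inner ℝ f ((p : H)) : ℝ) ≤ ‖f‖ * ‖(p : H)‖ := real_inner_le_norm _ _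
    have h4 : c * ‖(p : H)‖ ≤ ‖m‖ := hproj (p : H) p.2
    rcases eq_or_lt_of_le (norm_nonneg m) with hm0 | hm0
    · rw [← hm0]
      positivity
    · have h5 : ‖m‖ ^ 2 ≤ ‖f‖ * ‖(p : H)‖ := by rw [← h1, h2]; exact h3
      have hp0 : 0 ≤ ‖(p : H)‖ := norm_nonneg _
      have hf0 : 0 ≤ ‖f‖ := norm_nonneg _
      rw [div_mul_eq_mul_div, le_div_iff₀ hc]
      nlinarith [mul_le_mul_of_nonneg_left h4 hf0, mul_le_mul_of_nonneg_left h5 hc.le]
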